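/- Let θ ∈ (0,1], c > 0, μ > 1/2 and q > 0. Let (b_n) and (k_n) be sequences of positive integers with b_n → ∞, k_n → ∞ and b_n = O(k_n^q), and set n = b_n·k_n. Then √(k_n)·log(n)·| exp(−θ·c·k_n^{−μ}) − (1 − c·k_n^{−μ}/b_n)^{1+θ(b_n−1)} | → 0 as n → ∞. (This verifies, for the ARMAX model, the technical Condition 4(iv) comparing the lower tail of Z_{n1} with that of the Exp(θ) distribution at the rate o(log(n)^{−1}k_n^{−1/2}).) -/

import Mathlib

open Filter Asymptotics

/-- Exponential is 1-Lipschitz on the nonpositive reals. -/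
lemma exp_abs_sub_le_of_nonpos {A B : ℝ} (hA : A ≤ 0) (hB : B ≤ 0) :
    |Real.exp A - Real.exp B| ≤ |A - B| := by
  have key : ∀ X Y : ℝ, X ≤ 0 → Y ≤ 0 → Real.exp X - Real.exp Y ≤ |X - Y| := by
    intro X Y hX hY
    have h1 : Y - X + 1 ≤ Real.exp (Y - X) := Real.add_one_le_exp _
    have h2 : Real.exp (Y - X) * Real.exp X = Real.exp Y := by
      rw [← Real.exp_add]; ring_nf
    have h3 : (0:ℝ) < Real.exp X := Real.exp_pos _
    have h4 : Real.exp X ≤ 1 := Real.exp_le_one_iff.2 hX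
    have h6 : Real.exp X - Real.exp Y ≤ (X - Y) * Real.exp X := by
      nlinarith [mul_le_mul_of_nonneg_right h1 h3.le]
    rcases le_or_gt X Y with h | h
    · have h7 := Real.exp_le_exp.2 h
      have h8 := abs_nonneg (X - Y)
      linarith
    · have h9 : (X - Y) * Real.exp X ≤ X - Y := by nlinarith
      have h10 : X - Y ≤ |X - Y| := le_abs_self _
      linarith
  rw [abs_sub_le_iff]
  refine ⟨key A B hA hB, ?_⟩
  rw [abs_sub_comm]
  exact key B A hB hA

/-- The auxiliary real function tends to zero. -/
lemma aux_tendsto_zero (D E s : ℝ) (hs : 0 < s) :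
    Tendsto (fun t : ℝ => (D + E * Real.log t) * t ^ (-s)) atTop (nhds 0) := by
  have h1 : Tendsto (fun t : ℝ => D * t ^ (-s)) atTop (nhds 0) := by
    simpa using (tendsto_rpow_neg_atTop hs).const_mul D
  have h2 : Tendsto (fun t : ℝ => E * (Real.log t * t ^ (-s))) atTop (nhds 0) := by
    have hlo : Tendsto (fun t : ℝ => Real.log t / t ^ s) atTop (nhds 0) :=
      (isLittleO_log_rpow_atTop hs).tendsto_div_nhds_zero
    have heq : (fun t : ℝ => Real.log t * t ^ (-s)) =ᶠ[atTop]
        fun t => Real.log t / t ^ s := by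
      filter_upwards [eventually_gt_atTop (0:ℝ)] with t ht
      rw [Real.rpow_neg ht.le, div_eq_mul_inv]
    simpa using (hlo.congr' heq.symm).const_mul E
  have := h1.add h2
  simp only [add_zero] at this
  exact this.congr (by intro t; ring)

/-- Verification of the lower-tail bias condition for the ARMAX model: for `θ ∈ (0,1]`,
`c > 0`, `μ > 1/2`, block lengths `b_n → ∞` with `b_n = O(k_n^q)` and `k_n → ∞`, setting
`n = b_n k_n`, one has
`√k_n · log n · |exp(-θ c k_n^{-μ}) - (1 - c k_n^{-μ}/b_n)^{1+θ(b_n-1)}| → 0`. -/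
theorem armax_lower_tail_exponential_approx
    (θ c μ q : ℝ) (hθ : θ ∈ Set.Ioc (0 : ℝ) 1) (hc : 0 < c) (hμ : 1 / 2 < μ) (hq : 0 < q)
    (b k : ℕ → ℕ)
    (hb : Tendsto b atTop atTop) (hk : Tendsto k atTop atTop)
    (hbq : (fun n => (b n : ℝ)) =O[atTop] fun n => (k n : ℝ) ^ q) :
    Tendsto
      (fun n =>
        Real.sqrt (k n) * Real.log ((b n : ℝ) * (k n : ℝ)) *
          |Real.exp (-θ * c * (k n : ℝ) ^ (-μ)) -
            (1 - c * (k n : ℝ) ^ (-μ) / (b n : ℝ)) ^ (1 + θ * ((b n : ℝ) - 1))|)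
      atTop (nhds 0) := by
  obtain ⟨hθ0, hθ1⟩ := hθ
  have hkR : Tendsto (fun n => (k n : ℝ)) atTop atTop :=
    tendsto_natCast_atTop_atTop.comp hk
  -- the big-O bound
  obtain ⟨C₀, hC₀pos, hC₀⟩ := hbq.exists_pos
  set D : ℝ := max C₀ 1 with hD
  have hD1 : (1:ℝ) ≤ D := le_max_right _ _
  have hD0 : (0:ℝ) < D := lt_of_lt_of_le one_pos hD1
  have hBbound : ∀ᶠ n in atTop, (b n : ℝ) ≤ D * (k n : ℝ) ^ q := by
    filter_upwards [hC₀.bound, hkR.eventually_ge_atTop 0] with n hn hkn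
    have h1 : ‖(b n : ℝ)‖ = (b n : ℝ) := by
      rw [Real.norm_eq_abs, abs_of_nonneg (Nat.cast_nonneg _)]
    have h2 : ‖(k n : ℝ) ^ q‖ = (k n : ℝ) ^ q := by
      rw [Real.norm_eq_abs, abs_of_nonneg (Real.rpow_nonneg (Nat.cast_nonneg _) _)]
    rw [h1, h2] at hn
    have : C₀ * (k n : ℝ) ^ q ≤ D * (k n : ℝ) ^ q :=
      mul_le_mul_of_nonneg_right (le_max_left _ _)
        (Real.rpow_nonneg (Nat.cast_nonneg _) _)
    linarith
  -- x_n := c * k_n^{-μ} tends to 0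
  have hxto : Tendsto (fun n => c * (k n : ℝ) ^ (-μ)) atTop (nhds 0) := by
    have : Tendsto (fun n => (k n : ℝ) ^ (-μ)) atTop (nhds 0) :=
      (tendsto_rpow_neg_atTop (by linarith : (0:ℝ) < μ)).comp hkR
    simpa using this.const_mul c
  have hx4 : ∀ᶠ n in atTop, c * (k n : ℝ) ^ (-μ) ≤ 1/4 :=
    hxto.eventually (eventually_le_nhds (by norm_num))
  have hb1 : ∀ᶠ n in atTop, 1 ≤ b n := hb.eventually_ge_atTop 1
  have hk2 : ∀ᶠ n in atTop, 2 ≤ k n := hk.eventually_ge_atTop 2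
  -- the dominating sequence
  set g : ℕ → ℝ := fun n =>
    2 * c * (Real.log D + (q + 1) * Real.log (k n)) * (k n : ℝ) ^ (-(μ - 1/2)) with hg
  have hgto : Tendsto g atTop (nhds 0) := by
    have := (aux_tendsto_zero (2 * c * Real.log D) (2 * c * (q + 1)) (μ - 1/2)
      (by linarith)).comp hkR
    apply this.congr
    intro n
    simp only [Function.comp_apply, hg]
    ring
  apply squeeze_zero' (g := g) ?_ ?_ hgto
  · -- nonnegativity, eventually
    filter_upwards [hb1, hk2] with n hbn hkn
    have hB1 : (1:ℝ) ≤ (b n : ℝ) := by exact_mod_cast hbn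
    have hK1 : (1:ℝ) ≤ (k n : ℝ) := by exact_mod_cast le_trans one_le_two hkn
    have : (1:ℝ) ≤ (b n : ℝ) * (k n : ℝ) := one_le_mul_of_one_le_of_one_le hB1 hK1
    have hlog : 0 ≤ Real.log ((b n : ℝ) * (k n : ℝ)) := Real.log_nonneg this
    positivity
  · -- the main bound, eventually
    filter_upwards [hb1, hk2, hx4, hBbound] with n hbn hkn hxn hBn
    set K : ℝ := (k n : ℝ) with hKdef
    set B : ℝ := (b n : ℝ) with hBdef
    have hB1 : (1:ℝ) ≤ B := by rw [hBdef]; exact_mod_cast hbn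
    have hB0 : (0:ℝ) < B := lt_of_lt_of_le one_pos hB1
    have hK2 : (2:ℝ) ≤ K := by rw [hKdef]; exact_mod_cast hkn
    have hK1 : (1:ℝ) ≤ K := by linarith
    have hK0 : (0:ℝ) < K := by linarith
    set x : ℝ := c * K ^ (-μ) with hxdef
    have hx0 : 0 < x := mul_pos hc (Real.rpow_pos_of_pos hK0 _)
    set u : ℝ := x / B with hudef
    have hu0 : 0 < u := div_pos hx0 hB0
    have hux : u ≤ x := div_le_self hx0.le hB1
    have hu4 : u ≤ 1/4 := le_trans hux hxn
    have h1u : (0:ℝ) < 1 - u := by linarith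
    set p : ℝ := 1 + θ * (B - 1) with hpdef
    have hθB : 0 ≤ θ * (B - 1) := mul_nonneg hθ0.le (by linarith)
    have hp1 : (1:ℝ) ≤ p := by rw [hpdef]; linarith
    have hp0 : (0:ℝ) < p := by linarith
    have hpB : p ≤ B := by
      have : θ * (B - 1) ≤ 1 * (B - 1) := mul_le_mul_of_nonneg_right hθ1 (by linarith)
      rw [hpdef]; linarith
    -- rewrite the rpow as an exponential
    have hrpow : (1 - u) ^ p = Real.exp (p * Real.log (1 - u)) := by
      rw [Real.rpow_def_of_pos h1u, mul_comm]
    have hA : -θ * x ≤ 0 := by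
      have := mul_pos hθ0 hx0
      linarith
    have hlogu : Real.log (1 - u) ≤ 0 := Real.log_nonpos (by linarith) (by linarith)
    have hBexp : p * Real.log (1 - u) ≤ 0 := mul_nonpos_of_nonneg_of_nonpos hp0.le hlogu
    -- Taylor estimate for log(1-u)
    have htaylor : |u + Real.log (1 - u)| ≤ u^2 / (1 - u) := by
      have h := Real.abs_log_sub_add_sum_range_le
        (x := u) (by rw [abs_of_pos hu0]; linarith) 1
      simpa [abs_of_pos hu0] using h
    -- bound on the difference of exponents
    have hdiff : |(-θ * x) - p * Real.log (1 - u)| ≤ 2 * u := by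
      set e : ℝ := u + Real.log (1 - u) with hedef
      have hxBu : x = u * B := by rw [hudef]; exact (div_mul_cancel₀ x hB0.ne').symm
      have hrw : (-θ * x) - p * Real.log (1 - u) = (1 - θ) * u - p * e := by
        simp only [hedef, hpdef]
        rw [hxBu]; ring
      rw [hrw]
      have h1 : |(1 - θ) * u - p * e| ≤ |(1 - θ) * u| + |p * e| := abs_sub _ _
      have h2 : |(1 - θ) * u| = (1 - θ) * u :=
        abs_of_nonneg (mul_nonneg (by linarith) hu0.le)
      have h3 : |p * e| = p * |e| := by rw [abs_mul, abs_of_pos hp0]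
      have h4 : u^2 / (1 - u) ≤ (4/3) * u^2 := by
        rw [div_le_iff₀ h1u]
        have h4a : (3/4 : ℝ) ≤ 1 - u := by linarith
        have h4b : u^2 * (3/4) ≤ u^2 * (1 - u) :=
          mul_le_mul_of_nonneg_left h4a (sq_nonneg u)
        linarith
      have h5 : p * |e| ≤ B * ((4/3) * u^2) :=
        mul_le_mul hpB (le_trans htaylor h4) (abs_nonneg _) (by linarith)
      have h7 : B * ((4/3) * u^2) = (4/3) * x * u := by rw [hxBu]; ring
      rw [h7] at h5
      have h8 : (4/3) * x * u ≤ (1/3) * u := by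
        have h8a : x * u ≤ (1/4) * u := mul_le_mul_of_nonneg_right hxn hu0.le
        linarith
      have h9 : 0 ≤ θ * u := mul_nonneg hθ0.le hu0.le
      calc |(1 - θ) * u - p * e| ≤ |(1 - θ) * u| + |p * e| := h1
        _ ≤ (1 - θ) * u + (1/3) * u := by rw [h2, h3]; linarith
        _ ≤ 2 * u := by linarith
    -- the central estimate
    have hcentral : |Real.exp (-θ * x) - (1 - u) ^ p| ≤ 2 * u := by
      rw [hrpow]
      exact le_trans (exp_abs_sub_le_of_nonpos hA hBexp) hdiff
    -- log bound
    have hKq0 : (0:ℝ) < K ^ q := Real.rpow_pos_of_pos hK0 _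
    have hBK1 : (1:ℝ) ≤ B * K := one_le_mul_of_one_le_of_one_le hB1 hK1
    have hlogBK0 : 0 ≤ Real.log (B * K) := Real.log_nonneg hBK1
    have hlogK0 : 0 ≤ Real.log K := Real.log_nonneg hK1
    have hlogBK : Real.log (B * K) ≤ Real.log D + (q + 1) * Real.log K := by
      have hle : B * K ≤ D * K ^ q * K :=
        mul_le_mul_of_nonneg_right hBn hK0.le
      calc Real.log (B * K) ≤ Real.log (D * K ^ q * K) :=
            Real.log_le_log (by positivity) hle
        _ = Real.log D + q * Real.log K + Real.log K := by
            rw [Real.log_mul (by positivity) (by positivity),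
              Real.log_mul (by positivity) (by positivity), Real.log_rpow hK0]
        _ = Real.log D + (q + 1) * Real.log K := by ring
    have hlogD0 : 0 ≤ Real.log D := Real.log_nonneg hD1
    -- assemble
    have hsqrt : Real.sqrt K = K ^ ((1:ℝ)/2) := Real.sqrt_eq_rpow K
    have hKK : K ^ ((1:ℝ)/2) * K ^ (-μ) = K ^ (-(μ - 1/2)) := by
      rw [← Real.rpow_add hK0]
      congr 1
      ring
    have hgn : g n = 2 * c * (Real.log D + (q + 1) * Real.log K) * K ^ (-(μ - 1/2)) := by
      simp only [hg, ← hKdef]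
    have hsqrt0 : 0 ≤ Real.sqrt K := Real.sqrt_nonneg _
    have hexp_eq : Real.exp (-θ * c * K ^ (-μ)) = Real.exp (-θ * x) := by
      rw [hxdef]; ring_nf
    have hmain : Real.sqrt K * Real.log (B * K) *
        |Real.exp (-θ * c * K ^ (-μ)) - (1 - c * K ^ (-μ) / B) ^ (1 + θ * (B - 1))|
        ≤ g n := by
      have habs : |Real.exp (-θ * c * K ^ (-μ)) -
          (1 - c * K ^ (-μ) / B) ^ (1 + θ * (B - 1))| ≤ 2 * u := by
        rw [hexp_eq]
        exact hcentral
      have step1 : Real.sqrt K * Real.log (B * K) *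
          |Real.exp (-θ * c * K ^ (-μ)) - (1 - c * K ^ (-μ) / B) ^ (1 + θ * (B - 1))|
          ≤ Real.sqrt K * (Real.log D + (q + 1) * Real.log K) * (2 * x) := by
        apply mul_le_mul
        · exact mul_le_mul_of_nonneg_left hlogBK hsqrt0
        · calc |Real.exp (-θ * c * K ^ (-μ)) -
              (1 - c * K ^ (-μ) / B) ^ (1 + θ * (B - 1))| ≤ 2 * u := habs
            _ ≤ 2 * x := by linarith
        · exact abs_nonneg _
        · positivity
      have step2 : Real.sqrt K * (Real.log D + (q + 1) * Real.log K) * (2 * x) = g n := by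
        rw [hgn, hsqrt, hxdef, ← hKK]
        ring
      rw [← step2]
      exact step1
    exact hmain
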